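/- arXiv:0908.4041 — 3 statements merged into one kernel-verified Lean document; each statement's English description precedes it below -/
import Mathlib

section
/- For the separating triangle with vertices (B+1+k(B+2), 0), (B+1+k(B+2), 2), (B+3+k(B+2), 0), the open segment joining p_{i,j} and p_{i',j'} intersects this triangle whenever i ≤ k+1 < k+2 ≤ i', i.e., points of groups on opposite sides of the k-th notch are mutually blocked. -/
theorem segment_across_notch_blocked (n B k i i' j j' : ℕ)
    (hj : 1 ≤ j) (hjB : j ≤ B) (hj' : 1 ≤ j') (hj'B : j' ≤ B)
    (hi : 1 ≤ i) (hi' : i' ≤ n) (hk : k ≤ n - 2)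
    (hik : i ≤ k + 1) (hki' : k + 2 ≤ i') :
    ∀ p : ℕ → ℕ → ℝ × ℝ,
    (∀ a b, p a b = (((a : ℝ) - 1) * ((B : ℝ) + 2) + (b : ℝ), 1)) →
    (openSegment ℝ (p i j) (p i' j') ∩
      convexHull ℝ
        {(((B : ℝ) + 1 + (k : ℝ) * ((B : ℝ) + 2)), (0 : ℝ)),
         (((B : ℝ) + 1 + (k : ℝ) * ((B : ℝ) + 2)), (2 : ℝ)),
         (((B : ℝ) + 3 + (k : ℝ) * ((B : ℝ) + 2)), (0 : ℝ))}).Nonempty := by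
  intro p hp
  set a : ℝ := (B : ℝ) + 1 + (k : ℝ) * ((B : ℝ) + 2) with ha
  set x1 : ℝ := ((i : ℝ) - 1) * ((B : ℝ) + 2) + (j : ℝ) with hx1def
  set x2 : ℝ := ((i' : ℝ) - 1) * ((B : ℝ) + 2) + (j' : ℝ) with hx2def
  have hiR : (i : ℝ) ≤ (k : ℝ) + 1 := by exact_mod_cast hik
  have hjR : (j : ℝ) ≤ (B : ℝ) := by exact_mod_cast hjB
  have hi'R : (k : ℝ) + 2 ≤ (i' : ℝ) := by exact_mod_cast hki'
  have hj'R : (1 : ℝ) ≤ (j' : ℝ) := by exact_mod_cast hj'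
  have hB0 : (0 : ℝ) ≤ (B : ℝ) := Nat.cast_nonneg B
  have hlt1 : x1 < a + 1/2 := by
    rw [hx1def, ha]; nlinarith
  have hlt2 : a + 1/2 < x2 := by
    rw [hx2def, ha]; nlinarith
  refine ⟨(a + 1/2, 1), ?_, ?_⟩
  · rw [hp, hp]
    have hd : (0 : ℝ) < x2 - x1 := by linarith
    set t : ℝ := (a + 1/2 - x1) / (x2 - x1) with htdef
    have ht0 : 0 < t := div_pos (by linarith) hd
    have ht1 : t < 1 := by rw [htdef, div_lt_one hd]; linarith
    refine ⟨1 - t, t, by linarith, ht0, by ring, ?_⟩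
    have h1 : (1 - t) * x1 + t * x2 = a + 1/2 := by
      rw [htdef]; field_simp; ring
    have h2 : (1 - t) * 1 + t * 1 = (1 : ℝ) := by ring
    simp only [Prod.smul_mk, Prod.mk_add_mk, Prod.mk.injEq, smul_eq_mul]
    exact ⟨h1, h2⟩
  · set v1 : ℝ × ℝ := (a, 0) with hv1
    set v2 : ℝ × ℝ := (a, 2) with hv2
    set v3 : ℝ × ℝ := ((B : ℝ) + 3 + (k : ℝ) * ((B : ℝ) + 2), 0) with hv3
    have hv3' : v3 = (a + 2, 0) := by rw [hv3, ha]; norm_num; ring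
    have hm1 : v1 ∈ convexHull ℝ ({v1, v2, v3} : Set (ℝ × ℝ)) :=
      subset_convexHull ℝ _ (by simp)
    have hm2 : v2 ∈ convexHull ℝ ({v1, v2, v3} : Set (ℝ × ℝ)) :=
      subset_convexHull ℝ _ (by simp)
    have hm3 : v3 ∈ convexHull ℝ ({v1, v2, v3} : Set (ℝ × ℝ)) :=
      subset_convexHull ℝ _ (by simp)
    have hmid : midpoint ℝ v1 v3 ∈ convexHull ℝ ({v1, v2, v3} : Set (ℝ × ℝ)) :=
      (convex_convexHull ℝ _).segment_subset hm1 hm3 (midpoint_mem_segment v1 v3)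
    have hq : midpoint ℝ v2 (midpoint ℝ v1 v3) ∈ convexHull ℝ ({v1, v2, v3} : Set (ℝ × ℝ)) :=
      (convex_convexHull ℝ _).segment_subset hm2 hmid (midpoint_mem_segment _ _)
    have heq : midpoint ℝ v2 (midpoint ℝ v1 v3) = (a + 1/2, 1) := by
      rw [hv3', hv1, hv2]
      simp [midpoint_eq_smul_add, Prod.ext_iff]
      ring
    rw [heq] at hq
    exact hq
end

section
/- The open segment from p_0 = (1, n(B+2)−2) to any point p_{i,j} = ((i−1)(B+2)+j, 1) is disjoint from every separating triangle Δ_k, 0 ≤ k ≤ n−2, i.e., p_0 sees every point p_{i,j}, provided n ≥ 2 and B ≥ 1. -/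
theorem root_sees_all_points (n B i j : ℕ)
    (hn : 2 ≤ n) (hB : 1 ≤ B)
    (hi : 1 ≤ i) (hin : i ≤ n) (hj : 1 ≤ j) (hjB : j ≤ B) :
    ∀ p0 : ℝ × ℝ, p0 = (1, (n : ℝ) * ((B : ℝ) + 2) - 2) →
    ∀ pij : ℝ × ℝ, pij = (((i : ℝ) - 1) * ((B : ℝ) + 2) + (j : ℝ), 1) →
    ∀ k, k ≤ n - 2 →
    segment ℝ p0 pij ∩
      convexHull ℝ
        {(((B : ℝ) + 1 + (k : ℝ) * ((B : ℝ) + 2)), (0 : ℝ)),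
         (((B : ℝ) + 1 + (k : ℝ) * ((B : ℝ) + 2)), (2 : ℝ)),
         (((B : ℝ) + 3 + (k : ℝ) * ((B : ℝ) + 2)), (0 : ℝ))} = ∅ := by
  intro p0 hp0 pij hpij k hk
  subst hp0; subst hpij
  have hBr : (1:ℝ) ≤ (B:ℝ) := by exact_mod_cast hB
  have hkn : (k:ℝ) ≤ (n:ℝ) - 2 := by
    have h : (k:ℕ) + 2 ≤ n := by omega
    have := (Nat.cast_le (α := ℝ)).mpr h
    push_cast at this; linarith
  set a : ℝ := (B:ℝ) + 1 + (k:ℝ) * ((B:ℝ) + 2) with ha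
  have hfst : IsLinearMap ℝ (fun p : ℝ × ℝ => p.1) :=
    ⟨fun x y => rfl, fun c x => rfl⟩
  have hsum : IsLinearMap ℝ (fun p : ℝ × ℝ => p.1 + p.2) :=
    ⟨fun x y => by simp [Prod.fst_add, Prod.snd_add]; ring,
     fun c x => by simp [Prod.smul_fst, Prod.smul_snd, smul_eq_mul]; ring⟩
  apply Set.eq_empty_of_forall_notMem
  rintro z ⟨hz1, hz2⟩
  rcases le_or_gt i (k + 1) with hik | hik
  · -- segment lies in {x < a}, triangle in {a ≤ x}
    have hi1 : (i:ℝ) - 1 ≤ (k:ℝ) := by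
      have : (i:ℝ) ≤ (k:ℝ) + 1 := by exact_mod_cast hik
      linarith
    have hjr : (j:ℝ) ≤ (B:ℝ) := by exact_mod_cast hjB
    have hconv1 : Convex ℝ {p : ℝ × ℝ | p.1 < a} := convex_halfSpace_lt hfst a
    have hmem : z ∈ {p : ℝ × ℝ | p.1 < a} := by
      apply hconv1.segment_subset _ _ hz1
      · show (1:ℝ) < a
        have hk0 : (0:ℝ) ≤ (k:ℝ) := Nat.cast_nonneg k
        nlinarith
      · show ((i:ℝ) - 1) * ((B:ℝ) + 2) + (j:ℝ) < a
        nlinarith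
    have hconv2 : Convex ℝ {p : ℝ × ℝ | a ≤ p.1} := convex_halfSpace_ge hfst a
    have hmem2 : z ∈ {p : ℝ × ℝ | a ≤ p.1} := by
      refine convexHull_min ?_ hconv2 hz2
      rintro p hp
      simp only [Set.mem_insert_iff, Set.mem_singleton_iff] at hp
      rcases hp with rfl | rfl | rfl <;> simp [ha] <;> linarith
    simp only [Set.mem_setOf_eq] at hmem hmem2; linarith
  · -- segment lies in {x + y > a + 2}, triangle in {x + y ≤ a + 2}
    have hi1 : (k:ℝ) + 1 ≤ (i:ℝ) - 1 := by
      have : (k:ℝ) + 2 ≤ (i:ℝ) := by exact_mod_cast hik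
      linarith
    have hjr : (1:ℝ) ≤ (j:ℝ) := by exact_mod_cast hj
    have hconv1 : Convex ℝ {p : ℝ × ℝ | a + 2 < p.1 + p.2} := convex_halfSpace_gt hsum (a + 2)
    have hmem : z ∈ {p : ℝ × ℝ | a + 2 < p.1 + p.2} := by
      apply hconv1.segment_subset _ _ hz1
      · show a + 2 < (1:ℝ) + ((n:ℝ) * ((B:ℝ) + 2) - 2)
        nlinarith
      · show a + 2 < ((i:ℝ) - 1) * ((B:ℝ) + 2) + (j:ℝ) + 1
        nlinarith
    have hconv2 : Convex ℝ {p : ℝ × ℝ | p.1 + p.2 ≤ a + 2} := convex_halfSpace_le hsum (a + 2)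
    have hmem2 : z ∈ {p : ℝ × ℝ | p.1 + p.2 ≤ a + 2} := by
      refine convexHull_min ?_ hconv2 hz2
      rintro p hp
      simp only [Set.mem_insert_iff, Set.mem_singleton_iff] at hp
      rcases hp with rfl | rfl | rfl <;> simp [ha] <;> linarith
    simp only [Set.mem_setOf_eq] at hmem hmem2; linarith
end

section
/- If a : Fin (3n) → ℕ satisfies 4·a i > B and 2·a i < B for all i, and g : Fin (3n) → Fin n is such that for every k, ∑_{i : g i = k} a i = B, then every fiber g⁻¹(k) has exactly 3 elements. -/
theorem fibers_card_three (n B : ℕ) (a : Fin (3 * n) → ℕ)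
    (hlo : ∀ i, 4 * a i > B) (hhi : ∀ i, 2 * a i < B)
    (g : Fin (3 * n) → Fin n)
    (hg : ∀ k, ∑ i ∈ Finset.univ.filter (fun i => g i = k), a i = B) :
    ∀ k, (Finset.univ.filter (fun i => g i = k)).card = 3 := by
  intro k
  set s := Finset.univ.filter (fun i => g i = k) with hs
  have hB := hg k
  have hn : 0 < n := k.pos
  have i0 : Fin (3 * n) := ⟨0, by omega⟩
  have hBpos : 0 < B := lt_of_le_of_lt (Nat.zero_le _) (hhi i0)
  have hne : s.Nonempty := by
    by_contra h
    rw [Finset.not_nonempty_iff_eq_empty] at h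
    rw [← hs, h, Finset.sum_empty] at hB
    omega
  have h1 : ∑ _i ∈ s, B < ∑ i ∈ s, 4 * a i :=
    Finset.sum_lt_sum_of_nonempty hne (fun i _ => hlo i)
  have h2 : ∑ i ∈ s, 2 * a i < ∑ _i ∈ s, B :=
    Finset.sum_lt_sum_of_nonempty hne (fun i _ => hhi i)
  rw [Finset.sum_const, smul_eq_mul, ← Finset.mul_sum, hB] at h1
  rw [Finset.sum_const, smul_eq_mul, ← Finset.mul_sum, hB] at h2
  have hc4 : s.card < 4 := Nat.lt_of_mul_lt_mul_right h1
  have hc2 : 2 < s.card := Nat.lt_of_mul_lt_mul_right h2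
  omega
end
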